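/- arXiv:2304.12327 — 3 statements merged into one kernel-verified Lean document; each statement's English description precedes it below -/
import Mathlib

section
/- If (Q,d) is a complete separable metric space, then (P(Q), ρ) with the Prohorov metric is complete. -/
open MeasureTheory Metric Filter Topology TopologicalSpace

set_option linter.unusedSectionVars false
set_option linter.unusedVariables false

namespace ProhorovCompleteAux

open Set ENNReal

/-- Index type for a countable lattice of closed sets: finite unions of finite intersections
of closed balls with centers in a countable dense set and rational radii. -/
abbrev Idx := Finset (Finset (ℕ × ℚ))

variable {Q : Type*} [MetricSpace Q]

/-- The closed set indexed by `S : Idx`. -/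
def Cset (den : ℕ → Q) (S : Idx) : Set Q :=
  ⋃ t ∈ S, ⋂ p ∈ t, closedBall (den p.1) (p.2 : ℝ)

lemma isClosed_Cset (den : ℕ → Q) (S : Idx) : IsClosed (Cset den S) :=
  S.finite_toSet.isClosed_biUnion fun t _ =>
    isClosed_biInter fun p _ => Metric.isClosed_closedBall

lemma Cset_union (den : ℕ → Q) (S T : Idx) :
    Cset den (S ∪ T) = Cset den S ∪ Cset den T := by
  simp only [Cset, Finset.mem_union, Set.iUnion_or, Set.iUnion_union_distrib]

lemma Cset_univ (den : ℕ → Q) : Cset den {(∅ : Finset (ℕ × ℚ))} = univ := by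
  simp [Cset]

/-- Intersection of two `Idx`-indexed sets is again `Idx`-indexed. -/
def interIdx (S T : Idx) : Idx := (S ×ˢ T).image fun p => p.1 ∪ p.2

lemma Cset_interIdx (den : ℕ → Q) (S T : Idx) :
    Cset den (interIdx S T) = Cset den S ∩ Cset den T := by
  ext x
  simp only [Cset, interIdx, mem_iUnion, mem_iInter, mem_inter_iff, Finset.mem_image,
    Finset.mem_product, Prod.exists, exists_prop]
  constructor
  · rintro ⟨u, ⟨⟨s, t, ⟨hs, ht⟩, rfl⟩, hx⟩⟩
    exact ⟨⟨s, hs, fun p hp => hx p (Finset.mem_union_left _ hp)⟩,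
           ⟨t, ht, fun p hp => hx p (Finset.mem_union_right _ hp)⟩⟩
  · rintro ⟨⟨s, hs, hxs⟩, ⟨t, ht, hxt⟩⟩
    refine ⟨s ∪ t, ⟨⟨s, t, ⟨hs, ht⟩, rfl⟩, ?_⟩⟩
    intro p hp
    rcases Finset.mem_union.mp hp with h | h
    · exact hxs p h
    · exact hxt p h

/-- Every compact set inside an open set admits an `Idx`-indexed closed set squeezed between. -/
lemma exists_idx_squeeze {den : ℕ → Q} (hden : DenseRange den) {K U : Set Q}
    (hK : IsCompact K) (hU : IsOpen U) (hKU : K ⊆ U) :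
    ∃ S : Idx, K ⊆ interior (Cset den S) ∧ Cset den S ⊆ U := by
  have key : ∀ x : K, ∃ (i : ℕ) (q : ℚ), (x : Q) ∈ ball (den i) (q : ℝ) ∧
      closedBall (den i) (q : ℝ) ⊆ U := by
    rintro ⟨x, hx⟩
    obtain ⟨ε, hε, hballU⟩ := Metric.isOpen_iff.mp hU x (hKU hx)
    obtain ⟨q, hq0, hqε⟩ := exists_rat_btwn (by linarith : (0 : ℝ) < ε / 2)
    obtain ⟨i, hi⟩ := Metric.denseRange_iff.mp hden x _ hq0
    refine ⟨i, q, by simpa [mem_ball, dist_comm] using hi, ?_⟩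
    intro y hy
    apply hballU
    have h1 : dist y (den i) ≤ (q : ℝ) := hy
    have h2 : dist (den i) x < (q : ℝ) := by simpa [dist_comm] using hi
    have : dist y x < ε := by
      calc dist y x ≤ dist y (den i) + dist (den i) x := dist_triangle _ _ _
        _ < q + q := by linarith
        _ < ε := by linarith
    exact this
  choose i q hmem hsub using key
  have hcover : K ⊆ ⋃ x : K, ball (den (i x)) ((q x : ℝ)) := by
    intro z hz
    exact mem_iUnion.mpr ⟨⟨z, hz⟩, hmem ⟨z, hz⟩⟩
  obtain ⟨t, ht⟩ := hK.elim_finite_subcover _ (fun x : K => isOpen_ball) hcover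
  refine ⟨t.image fun x => ({(i x, q x)} : Finset (ℕ × ℚ)), ?_, ?_⟩
  · have hopen : IsOpen (⋃ x ∈ t, ball (den (i x)) ((q x : ℝ))) :=
      isOpen_biUnion fun _ _ => isOpen_ball
    have hsub' : (⋃ x ∈ t, ball (den (i x)) ((q x : ℝ))) ⊆
        Cset den (t.image fun x => ({(i x, q x)} : Finset (ℕ × ℚ))) := by
      intro y hy
      obtain ⟨x, hxt, hxy⟩ := mem_iUnion₂.mp hy
      refine mem_iUnion₂.mpr ⟨{(i x, q x)}, Finset.mem_image_of_mem _ hxt, ?_⟩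
      simp only [Finset.mem_singleton, mem_iInter]
      rintro p rfl
      exact ball_subset_closedBall hxy
    exact fun z hz => interior_maximal hsub' hopen (ht hz)
  · intro y hy
    obtain ⟨s, hs, hys⟩ := mem_iUnion₂.mp hy
    obtain ⟨x, hxt, rfl⟩ := Finset.mem_image.mp hs
    have := mem_iInter₂.mp hys (i x, q x) (Finset.mem_singleton_self _)
    exact hsub x this

variable [MeasurableSpace Q] [BorelSpace Q]

section Gamma

variable {den : ℕ → Q} {γ : Idx → ℝ≥0∞}

/-- The candidate value of the limit measure on a would-be-compact set `A`. -/
noncomputable def lamE (den : ℕ → Q) (γ : Idx → ℝ≥0∞) (A : Set Q) : ℝ≥0∞ :=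
  ⨅ (S : Idx) (_ : A ⊆ interior (Cset den S)), γ S

lemma lamE_le (hγ : ∀ S, γ S ≤ 1) {A : Set Q} {S : Idx}
    (h : A ⊆ interior (Cset den S)) : lamE den γ A ≤ γ S :=
  iInf₂_le S h

lemma lamE_le_one (hγ : ∀ S, γ S ≤ 1) (A : Set Q) : lamE den γ A ≤ 1 := by
  refine le_trans (lamE_le hγ (S := {(∅ : Finset (ℕ × ℚ))}) ?_) (hγ _)
  rw [Cset_univ, interior_univ]
  exact subset_univ A

lemma lamE_ne_top (hγ : ∀ S, γ S ≤ 1) (A : Set Q) : lamE den γ A ≠ ∞ :=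
  ((lamE_le_one hγ A).trans_lt one_lt_top).ne

lemma lamE_mono {A B : Set Q} (h : A ⊆ B) : lamE den γ A ≤ lamE den γ B :=
  iInf_mono fun S => iInf_mono' fun hB => ⟨h.trans hB, le_rfl⟩

end Gamma


section Gamma2

variable {den : ℕ → Q} {γ : Idx → ℝ≥0∞}

lemma lamE_union_le (hle1 : ∀ S, γ S ≤ 1) (hsub : ∀ S T : Idx, γ (S ∪ T) ≤ γ S + γ T)
    (K₁ K₂ : Set Q) :
    lamE den γ (K₁ ∪ K₂) ≤ lamE den γ K₁ + lamE den γ K₂ := by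
  refine ENNReal.le_of_forall_pos_le_add fun ε hε _ => ?_
  have h₁ : lamE den γ K₁ < lamE den γ K₁ + (↑(ε / 2) : ℝ≥0∞) :=
    ENNReal.lt_add_right (lamE_ne_top hle1 _) (by exact_mod_cast (half_pos hε).ne')
  have h₂ : lamE den γ K₂ < lamE den γ K₂ + (↑(ε / 2) : ℝ≥0∞) :=
    ENNReal.lt_add_right (lamE_ne_top hle1 _) (by exact_mod_cast (half_pos hε).ne')
  rw [lamE, iInf_lt_iff] at h₁ h₂
  obtain ⟨S, hS⟩ := h₁
  obtain ⟨T, hT⟩ := h₂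
  rw [iInf_lt_iff] at hS hT
  obtain ⟨hSadm, hSlt⟩ := hS
  obtain ⟨hTadm, hTlt⟩ := hT
  have hadm : K₁ ∪ K₂ ⊆ interior (Cset den (S ∪ T)) := by
    rw [Cset_union]
    refine union_subset (hSadm.trans ?_) (hTadm.trans ?_) <;>
      exact interior_mono (by simp [subset_union_left, subset_union_right])
  calc lamE den γ (K₁ ∪ K₂) ≤ γ (S ∪ T) := lamE_le hle1 hadm
    _ ≤ γ S + γ T := hsub S T
    _ ≤ (lamE den γ K₁ + (↑(ε / 2) : ℝ≥0∞)) + (lamE den γ K₂ + (↑(ε / 2) : ℝ≥0∞)) :=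
        add_le_add hSlt.le hTlt.le
    _ = lamE den γ K₁ + lamE den γ K₂ + ((↑(ε / 2) : ℝ≥0∞) + (↑(ε / 2) : ℝ≥0∞)) :=
        add_add_add_comm _ _ _ _
    _ = lamE den γ K₁ + lamE den γ K₂ + ε := by rw [← ENNReal.coe_add, add_halves]

lemma le_lamE_union (hden : DenseRange den) (hle1 : ∀ S, γ S ≤ 1)
    (hmono : ∀ {S T : Idx}, Cset den S ⊆ Cset den T → γ S ≤ γ T)
    (hdisj : ∀ S T : Idx, Disjoint (Cset den S) (Cset den T) → γ (S ∪ T) = γ S + γ T)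
    {K₁ K₂ : Set Q} (h₁ : IsCompact K₁) (h₂ : IsCompact K₂) (hd : Disjoint K₁ K₂) :
    lamE den γ K₁ + lamE den γ K₂ ≤ lamE den γ (K₁ ∪ K₂) := by
  refine le_iInf₂ fun S hS => ?_
  obtain ⟨δ, hδ, hdisj'⟩ := hd.exists_thickenings h₁ h₂.isClosed
  obtain ⟨S₁, hS₁i, hS₁s⟩ :=
    exists_idx_squeeze hden h₁ isOpen_thickening (self_subset_thickening hδ _)
  obtain ⟨S₂, hS₂i, hS₂s⟩ :=
    exists_idx_squeeze hden h₂ isOpen_thickening (self_subset_thickening hδ _)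
  have hdd : Disjoint (Cset den S₁) (Cset den S₂) := hdisj'.mono hS₁s hS₂s
  have hadm₁ : K₁ ⊆ interior (Cset den (interIdx S S₁)) := by
    rw [Cset_interIdx, interior_inter]
    exact subset_inter ((subset_union_left).trans hS) hS₁i
  have hadm₂ : K₂ ⊆ interior (Cset den (interIdx S S₂)) := by
    rw [Cset_interIdx, interior_inter]
    exact subset_inter ((subset_union_right).trans hS) hS₂i
  have hdd' : Disjoint (Cset den (interIdx S S₁)) (Cset den (interIdx S S₂)) := by
    rw [Cset_interIdx, Cset_interIdx]
    exact hdd.mono inter_subset_right inter_subset_right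
  calc lamE den γ K₁ + lamE den γ K₂ ≤ γ (interIdx S S₁) + γ (interIdx S S₂) :=
        add_le_add (lamE_le hle1 hadm₁) (lamE_le hle1 hadm₂)
    _ = γ (interIdx S S₁ ∪ interIdx S S₂) := (hdisj _ _ hdd').symm
    _ ≤ γ S := by
        refine hmono ?_
        rw [Cset_union, Cset_interIdx, Cset_interIdx]
        exact union_subset inter_subset_left inter_subset_left

end Gamma2

/-- The content associated to the data `(den, γ)`. -/
noncomputable def prohorovContent (den : ℕ → Q) (γ : Idx → ℝ≥0∞) (hden : DenseRange den)
    (hle1 : ∀ S, γ S ≤ 1)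
    (hmono : ∀ {S T : Idx}, Cset den S ⊆ Cset den T → γ S ≤ γ T)
    (hsub : ∀ S T : Idx, γ (S ∪ T) ≤ γ S + γ T)
    (hdisj : ∀ S T : Idx, Disjoint (Cset den S) (Cset den T) → γ (S ∪ T) = γ S + γ T) :
    Content Q where
  toFun K := (lamE den γ K).toNNReal
  mono' K₁ K₂ h := ENNReal.toNNReal_mono (lamE_ne_top hle1 _) (lamE_mono h)
  sup_le' K₁ K₂ := by
    show (lamE den γ ((K₁ ⊔ K₂ : Compacts Q) : Set Q)).toNNReal ≤
      (lamE den γ (K₁ : Set Q)).toNNReal + (lamE den γ (K₂ : Set Q)).toNNReal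
    have key : lamE den γ (K₁ ⊔ K₂ : Compacts Q) ≤ lamE den γ K₁ + lamE den γ K₂ := by
      refine ENNReal.le_of_forall_pos_le_add fun ε hε _ => ?_
      have h₁ : lamE den γ (K₁ : Set Q) < lamE den γ (K₁ : Set Q) + (↑(ε / 2) : ℝ≥0∞) :=
        ENNReal.lt_add_right (lamE_ne_top hle1 _) (by exact_mod_cast (half_pos hε).ne')
      have h₂ : lamE den γ (K₂ : Set Q) < lamE den γ (K₂ : Set Q) + (↑(ε / 2) : ℝ≥0∞) :=
        ENNReal.lt_add_right (lamE_ne_top hle1 _) (by exact_mod_cast (half_pos hε).ne')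
      rw [lamE, iInf_lt_iff] at h₁ h₂
      obtain ⟨S, hS⟩ := h₁
      obtain ⟨T, hT⟩ := h₂
      rw [iInf_lt_iff] at hS hT
      obtain ⟨hSadm, hSlt⟩ := hS
      obtain ⟨hTadm, hTlt⟩ := hT
      have hadm : ((K₁ ⊔ K₂ : Compacts Q) : Set Q) ⊆ interior (Cset den (S ∪ T)) := by
        rw [Cset_union]
        refine union_subset (hSadm.trans ?_) (hTadm.trans ?_) <;>
          exact interior_mono (by simp [subset_union_left, subset_union_right])
      calc lamE den γ (K₁ ⊔ K₂ : Compacts Q) ≤ γ (S ∪ T) := lamE_le hle1 hadm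
        _ ≤ γ S + γ T := hsub S T
        _ ≤ (lamE den γ (K₁ : Set Q) + (↑(ε / 2) : ℝ≥0∞)) + (lamE den γ (K₂ : Set Q) + (↑(ε / 2) : ℝ≥0∞)) :=
            add_le_add hSlt.le hTlt.le
        _ = lamE den γ (K₁ : Set Q) + lamE den γ (K₂ : Set Q)
              + ((↑(ε / 2) : ℝ≥0∞) + (↑(ε / 2) : ℝ≥0∞)) := add_add_add_comm _ _ _ _
        _ = lamE den γ (K₁ : Set Q) + lamE den γ (K₂ : Set Q) + ε := by
            rw [← ENNReal.coe_add, add_halves]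
    calc (lamE den γ (K₁ ⊔ K₂ : Compacts Q)).toNNReal
        ≤ (lamE den γ (K₁ : Set Q) + lamE den γ (K₂ : Set Q)).toNNReal :=
          ENNReal.toNNReal_mono
            (ENNReal.add_ne_top.mpr ⟨lamE_ne_top hle1 _, lamE_ne_top hle1 _⟩) key
      _ = (lamE den γ (K₁ : Set Q)).toNNReal + (lamE den γ (K₂ : Set Q)).toNNReal :=
          ENNReal.toNNReal_add (lamE_ne_top hle1 _) (lamE_ne_top hle1 _)
  sup_disjoint' K₁ K₂ hd _ _ := by
    show (lamE den γ ((K₁ ⊔ K₂ : Compacts Q) : Set Q)).toNNReal =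
      (lamE den γ (K₁ : Set Q)).toNNReal + (lamE den γ (K₂ : Set Q)).toNNReal
    have key : lamE den γ ((K₁ ⊔ K₂ : Compacts Q) : Set Q)
        = lamE den γ (K₁ : Set Q) + lamE den γ (K₂ : Set Q) := by
      have hcoe : ((K₁ ⊔ K₂ : Compacts Q) : Set Q) = (K₁ : Set Q) ∪ (K₂ : Set Q) := rfl
      rw [hcoe]
      exact le_antisymm (lamE_union_le hle1 hsub _ _)
        (le_lamE_union hden hle1 hmono hdisj K₁.2 K₂.2 hd)
    rw [key, ENNReal.toNNReal_add (lamE_ne_top hle1 _) (lamE_ne_top hle1 _)]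


section Tight

variable {Q : Type*} [MetricSpace Q] [MeasurableSpace Q] [BorelSpace Q] [CompleteSpace Q]

lemma cover_bound {den : ℕ → Q} (hden : DenseRange den)
    (μ : ℕ → Measure Q) [∀ n, IsProbabilityMeasure (μ n)]
    (hc : ∀ δ : ℝ, 0 < δ → ∃ N, ∀ n, N ≤ n → levyProkhorovEDist (μ n) (μ N) < ENNReal.ofReal δ)
    {δ ε : ℝ} (hδ : 0 < δ) (hε : 0 < ε) :
    ∃ k : ℕ, ∀ n, 1 ≤ μ n (⋃ i ∈ Finset.range k, ball (den i) δ) + ENNReal.ofReal ε := by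
  set ε' : ℝ := min (δ / 2) (ε / 2) with hε'def
  have hε' : 0 < ε' := lt_min (by linarith) (by linarith)
  obtain ⟨N, hN⟩ := hc ε' hε'
  set V : ℕ → Set Q := fun k => ⋃ i ∈ Finset.range k, ball (den i) (δ / 2) with hV
  have hVmono : Monotone V := by
    intro a b hab x hx
    obtain ⟨i, hi, hxi⟩ := Set.mem_iUnion₂.mp hx
    exact Set.mem_iUnion₂.mpr
      ⟨i, Finset.mem_range.mpr (lt_of_lt_of_le (Finset.mem_range.mp hi) hab), hxi⟩
  have hVuniv : ⋃ k, V k = Set.univ := by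
    ext x
    simp only [Set.mem_iUnion, Set.mem_univ, iff_true]
    obtain ⟨i, hi⟩ := Metric.denseRange_iff.mp hden x (δ / 2) (by linarith)
    exact ⟨i + 1, Set.mem_biUnion (Finset.self_mem_range_succ i) (by simpa [dist_comm] using hi)⟩
  have hVopen : ∀ k, IsOpen (V k) := fun k => isOpen_biUnion fun _ _ => isOpen_ball
  have hVtend : ∀ m, Tendsto (fun k => μ m (V k)) atTop (𝓝 1) := by
    intro m
    have := tendsto_measure_iUnion_atTop (μ := μ m) hVmono
    rwa [hVuniv, measure_univ] at this
  have single : ∀ m, ∃ k₀, ∀ k, k₀ ≤ k → 1 ≤ μ m (V k) + ENNReal.ofReal ε' := by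
    intro m
    rcases le_or_gt 1 (ENNReal.ofReal ε') with h1 | h1
    · exact ⟨0, fun k _ => le_add_left h1⟩
    · have hlt : (1 : ℝ≥0∞) - ENNReal.ofReal ε' < 1 :=
        ENNReal.sub_lt_self one_ne_top one_ne_zero (ENNReal.ofReal_pos.2 hε').ne'
      obtain ⟨k₀, hk₀⟩ := ((hVtend m).eventually_const_lt hlt).exists_forall_of_atTop
      refine ⟨k₀, fun k hk => ?_⟩
      have h2 := hk₀ k hk
      calc (1 : ℝ≥0∞) = (1 - ENNReal.ofReal ε') + ENNReal.ofReal ε' :=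
            (tsub_add_cancel_of_le h1.le).symm
        _ ≤ μ m (V k) + ENNReal.ofReal ε' := add_le_add_left h2.le _
  choose k₀ hk₀ using single
  refine ⟨(Finset.range (N + 1)).sup k₀, fun n => ?_⟩
  set k := (Finset.range (N + 1)).sup k₀ with hkdef
  have hVU : V k ⊆ ⋃ i ∈ Finset.range k, ball (den i) δ :=
    Set.iUnion₂_mono fun i _ => ball_subset_ball (by linarith)
  have hεε : ENNReal.ofReal ε' + ENNReal.ofReal ε' ≤ ENNReal.ofReal ε := by
    rw [← ENNReal.ofReal_add hε'.le hε'.le]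
    apply ENNReal.ofReal_le_ofReal
    have : ε' ≤ ε / 2 := min_le_right _ _
    linarith
  rcases le_or_gt n N with hn | hn
  · have hkn : k₀ n ≤ k := Finset.le_sup (Finset.mem_range.mpr (Nat.lt_succ_of_le hn))
    calc (1 : ℝ≥0∞) ≤ μ n (V k) + ENNReal.ofReal ε' := hk₀ n k hkn
      _ ≤ μ n (⋃ i ∈ Finset.range k, ball (den i) δ) + ENNReal.ofReal ε :=
          add_le_add (measure_mono hVU)
            (ENNReal.ofReal_le_ofReal (min_le_right _ _ |>.trans (by linarith)))
  · have hLP := hN n hn.le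
    have key := right_measure_le_of_levyProkhorovEDist_lt hLP (B := V k)
      (hVopen k).measurableSet
    rw [ENNReal.toReal_ofReal hε'.le] at key
    have hthick : thickening ε' (V k) ⊆ ⋃ i ∈ Finset.range k, ball (den i) δ := by
      rw [hV]
      simp only [thickening_iUnion]
      refine Set.iUnion₂_mono fun i hi => ?_
      intro y hy
      obtain ⟨z, hz, hyz⟩ := mem_thickening_iff.mp hy
      have hz' : dist z (den i) < δ / 2 := hz
      have : dist y (den i) < δ := by
        have h3 : ε' ≤ δ / 2 := min_le_left _ _
        calc dist y (den i) ≤ dist y z + dist z (den i) := dist_triangle _ _ _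
          _ < ε' + δ / 2 := by linarith
          _ ≤ δ := by linarith
      exact this
    have hkN : k₀ N ≤ k := Finset.le_sup (Finset.mem_range.mpr (Nat.lt_succ_self N))
    calc (1 : ℝ≥0∞) ≤ μ N (V k) + ENNReal.ofReal ε' := hk₀ N k hkN
      _ ≤ (μ n (thickening ε' (V k)) + ENNReal.ofReal ε') + ENNReal.ofReal ε' :=
          add_le_add_left key _
      _ = μ n (thickening ε' (V k)) + (ENNReal.ofReal ε' + ENNReal.ofReal ε') := by
          rw [add_assoc]
      _ ≤ μ n (⋃ i ∈ Finset.range k, ball (den i) δ) + ENNReal.ofReal ε :=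
          add_le_add (measure_mono hthick) hεε

lemma tight_compact {den : ℕ → Q} (hden : DenseRange den)
    (μ : ℕ → Measure Q) [∀ n, IsProbabilityMeasure (μ n)]
    (hc : ∀ δ : ℝ, 0 < δ → ∃ N, ∀ n, N ≤ n → levyProkhorovEDist (μ n) (μ N) < ENNReal.ofReal δ)
    {ε : ℝ} (hε : 0 < ε) :
    ∃ K : Set Q, IsCompact K ∧ ∀ n, 1 ≤ μ n K + ENNReal.ofReal ε := by
  classical
  have hj : ∀ j : ℕ, ∃ k, ∀ n,
      1 ≤ μ n (⋃ i ∈ Finset.range k, ball (den i) ((1 / 2 : ℝ) ^ j))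
        + ENNReal.ofReal (ε / 2 ^ (j + 1)) :=
    fun j => cover_bound hden μ hc (by positivity) (by positivity)
  choose k hk using hj
  set D : ℕ → Set Q := fun j => ⋃ i ∈ Finset.range (k j), closedBall (den i) ((1 / 2 : ℝ) ^ j)
    with hD
  have hDclosed : ∀ j, IsClosed (D j) := fun j =>
    (Finset.range (k j)).finite_toSet.isClosed_biUnion fun _ _ => Metric.isClosed_closedBall
  have hUD : ∀ j, (⋃ i ∈ Finset.range (k j), ball (den i) ((1 / 2 : ℝ) ^ j)) ⊆ D j :=
    fun j => Set.iUnion₂_mono fun i hi => ball_subset_closedBall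
  refine ⟨⋂ j, D j, ?_, ?_⟩
  · apply TotallyBounded.isCompact_of_isClosed
    · rw [Metric.totallyBounded_iff]
      intro r hr
      obtain ⟨j, hjr⟩ := exists_pow_lt_of_lt_one hr (by norm_num : (1 / 2 : ℝ) < 1)
      refine ⟨↑((Finset.range (k j)).image den), Finset.finite_toSet _, ?_⟩
      refine (Set.iInter_subset _ j).trans ?_
      refine Set.iUnion₂_subset fun i hi => ?_
      refine (closedBall_subset_ball hjr).trans ?_
      exact Set.subset_biUnion_of_mem (u := fun y => ball y r)
        (Finset.mem_coe.mpr (Finset.mem_image_of_mem den hi))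
    · exact isClosed_iInter hDclosed
  · intro n
    have hcompl : μ n (⋂ j, D j)ᶜ ≤ ENNReal.ofReal ε := by
      have h1 : μ n (⋂ j, D j)ᶜ ≤ ∑' j, μ n (D j)ᶜ := by
        rw [Set.compl_iInter]
        exact measure_iUnion_le _
      have h2 : ∀ j, μ n (D j)ᶜ ≤ ENNReal.ofReal (ε / 2 ^ (j + 1)) := by
        intro j
        have hD1 : 1 ≤ μ n (D j) + ENNReal.ofReal (ε / 2 ^ (j + 1)) :=
          le_trans (hk j n) (add_le_add_left (measure_mono (hUD j)) _)
        rw [measure_compl (hDclosed j).measurableSet (measure_ne_top _ _), measure_univ]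
        rw [tsub_le_iff_right]
        rwa [add_comm] at hD1
      refine h1.trans <| le_trans (ENNReal.tsum_le_tsum h2) ?_
      have h3 : ∀ j : ℕ, ENNReal.ofReal (ε / 2 ^ (j + 1))
          = ENNReal.ofReal ε * (2⁻¹ : ℝ≥0∞) ^ (j + 1) := by
        intro j
        rw [div_eq_mul_inv, ← inv_pow, ENNReal.ofReal_mul hε.le, ENNReal.ofReal_pow (by norm_num)]
        congr 2
        rw [ENNReal.ofReal_inv_of_pos (by norm_num : (0:ℝ) < 2)]
        norm_num
      calc ∑' j, ENNReal.ofReal (ε / 2 ^ (j + 1))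
          = ENNReal.ofReal ε * ∑' j, (2⁻¹ : ℝ≥0∞) ^ (j + 1) := by
            simp_rw [h3]; rw [ENNReal.tsum_mul_left]
        _ = ENNReal.ofReal ε * (2⁻¹ * (1 - 2⁻¹)⁻¹) := by rw [ENNReal.tsum_geometric_add_one]
        _ = ENNReal.ofReal ε := by
            rw [ENNReal.one_sub_inv_two, inv_inv,
              ENNReal.inv_mul_cancel (by norm_num) (by norm_num), mul_one]
        _ ≤ ENNReal.ofReal ε := le_rfl
    calc (1 : ℝ≥0∞) = μ n (⋂ j, D j) + μ n (⋂ j, D j)ᶜ := by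
          rw [measure_add_measure_compl (isClosed_iInter hDclosed).measurableSet, measure_univ]
      _ ≤ μ n (⋂ j, D j) + ENNReal.ofReal ε := add_le_add_right hcompl _

end Tight


section Diagonal

lemma exists_diagonal (y : ℕ → Idx → ℝ≥0∞) :
    ∃ (φ : ℕ → ℕ) (γ : Idx → ℝ≥0∞), StrictMono φ ∧
      ∀ S, Tendsto (fun j => y (φ j) S) atTop (𝓝 (γ S)) := by
  obtain ⟨γ, -, φ, hφ, htend⟩ :=
    (isCompact_univ (X := Idx → ℝ≥0∞)).tendsto_subseq (fun n => Set.mem_univ (y n))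
  exact ⟨φ, γ, hφ, fun S => tendsto_pi_nhds.mp htend S⟩

end Diagonal

section Main

lemma exists_subseq_tendsto {Q : Type*} [MetricSpace Q] [MeasurableSpace Q] [BorelSpace Q]
    [CompleteSpace Q] [SeparableSpace Q] [Nonempty Q]
    (u : ℕ → LevyProkhorov (ProbabilityMeasure Q)) (hu : CauchySeq u) :
    ∃ (P : ProbabilityMeasure Q) (φ : ℕ → ℕ), StrictMono φ ∧
      Tendsto (fun j => LevyProkhorov.toMeasureEquiv (u (φ j))) atTop (𝓝 P) := by
  obtain ⟨den, hden⟩ := exists_dense_seq Q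
  set μ : ℕ → Measure Q :=
    fun n => (LevyProkhorov.toMeasureEquiv (u n) : ProbabilityMeasure Q).toMeasure
    with hμdef
  haveI : ∀ n, IsProbabilityMeasure (μ n) := fun n => inferInstance
  have hc : ∀ δ : ℝ, 0 < δ →
      ∃ N, ∀ n, N ≤ n → levyProkhorovEDist (μ n) (μ N) < ENNReal.ofReal δ := by
    intro δ hδ
    obtain ⟨N, hN⟩ := Metric.cauchySeq_iff'.mp hu δ hδ
    refine ⟨N, fun n hn => ?_⟩
    have h1 := hN n hn
    rw [LevyProkhorov.dist_probabilityMeasure_def] at h1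
    exact (ENNReal.lt_ofReal_iff_toReal_lt (levyProkhorovEDist_ne_top _ _)).mpr h1
  obtain ⟨φ, γ, hφ, hγ⟩ := exists_diagonal (fun n S => μ n (Cset den S))
  have hle1 : ∀ S, γ S ≤ 1 := fun S =>
    le_of_tendsto (hγ S) (Eventually.of_forall fun j => prob_le_one)
  have hmono : ∀ {S T : Idx}, Cset den S ⊆ Cset den T → γ S ≤ γ T := fun {S T} h =>
    le_of_tendsto_of_tendsto' (hγ S) (hγ T) fun j => measure_mono h
  have hsub : ∀ S T : Idx, γ (S ∪ T) ≤ γ S + γ T := fun S T =>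
    le_of_tendsto_of_tendsto' (hγ (S ∪ T)) ((hγ S).add (hγ T)) fun j => by
      rw [Cset_union]; exact measure_union_le _ _
  have hdisj : ∀ S T : Idx, Disjoint (Cset den S) (Cset den T) → γ (S ∪ T) = γ S + γ T := by
    intro S T hd
    refine tendsto_nhds_unique (hγ (S ∪ T)) ?_
    have heq : (fun j => μ (φ j) (Cset den (S ∪ T)))
        = fun j => μ (φ j) (Cset den S) + μ (φ j) (Cset den T) := by
      funext j
      rw [Cset_union, measure_union hd (isClosed_Cset den T).measurableSet]
    rw [heq]
    exact (hγ S).add (hγ T)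
  set c : Content Q := prohorovContent den γ hden hle1 (fun {S T} => hmono) hsub hdisj with hcdef
  have hcK : ∀ (K : Set Q) (hK : IsCompact K),
      (c ⟨K, hK⟩ : ℝ≥0∞) = lamE den γ K := fun K hK =>
    ENNReal.coe_toNNReal (lamE_ne_top hle1 _)
  set ν : Measure Q := c.measure with hνdef
  have hν_open : ∀ (G : Set Q), IsOpen G → ν G ≤ atTop.liminf (fun j => μ (φ j) G) := by
    intro G hG
    rw [hνdef, c.measure_apply hG.measurableSet, c.outerMeasure_of_isOpen G hG]
    show (⨆ (K : Compacts Q) (_ : (K : Set Q) ⊆ ((⟨G, hG⟩ : Opens Q) : Set Q)), (c K : ℝ≥0∞))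
      ≤ atTop.liminf (fun j => μ (φ j) G)
    refine iSup₂_le fun K hK => ?_
    obtain ⟨S, hSi, hSs⟩ := exists_idx_squeeze hden K.2 hG hK
    have h1 : (c K : ℝ≥0∞) ≤ γ S := by
      obtain ⟨Ks, hKs⟩ := K
      rw [hcK Ks hKs]
      exact lamE_le hle1 hSi
    have h2 : γ S ≤ atTop.liminf (fun j => μ (φ j) G) := by
      rw [← (hγ S).liminf_eq]
      exact liminf_le_liminf (Eventually.of_forall fun j => measure_mono hSs)
    exact h1.trans h2
  have hν_univ_le : ν univ ≤ 1 := by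
    rw [hνdef, c.measure_apply MeasurableSet.univ, c.outerMeasure_of_isOpen univ isOpen_univ]
    show (⨆ (K : Compacts Q)
      (_ : (K : Set Q) ⊆ ((⟨univ, isOpen_univ⟩ : Opens Q) : Set Q)), (c K : ℝ≥0∞)) ≤ 1
    refine iSup₂_le fun K _ => ?_
    obtain ⟨Ks, hKs⟩ := K
    rw [hcK Ks hKs]
    exact lamE_le_one hle1 _
  have hν_univ_ge : (1 : ℝ≥0∞) ≤ ν univ := by
    refine ENNReal.le_of_forall_pos_le_add fun ε hε _ => ?_
    obtain ⟨K, hK, hKn⟩ := tight_compact hden μ hc (ε := (ε : ℝ)) (by exact_mod_cast hε)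
    rw [ENNReal.ofReal_coe_nnreal] at hKn
    have hKγ : ∀ S, K ⊆ Cset den S → (1 : ℝ≥0∞) ≤ γ S + ε := by
      intro S hKS
      refine ge_of_tendsto' ((hγ S).add (tendsto_const_nhds (x := (ε : ℝ≥0∞)))) fun j => ?_
      exact (hKn (φ j)).trans (add_le_add_left (measure_mono hKS) _)
    have hlam : (1 : ℝ≥0∞) ≤ lamE den γ K + ε := by
      rw [lamE, ENNReal.iInf_add]
      refine le_iInf fun S => ?_
      rw [ENNReal.iInf_add]
      refine le_iInf fun hS => ?_
      exact hKγ S (hS.trans interior_subset)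
    calc (1 : ℝ≥0∞) ≤ lamE den γ K + ε := hlam
      _ = (c ⟨K, hK⟩ : ℝ≥0∞) + ε := by rw [hcK K hK]
      _ ≤ c.innerContent ⟨univ, isOpen_univ⟩ + ε :=
          add_le_add_left (c.le_innerContent _ _ (Set.subset_univ _)) _
      _ = ν univ + ε := by
          rw [hνdef, c.measure_apply MeasurableSet.univ,
            c.outerMeasure_of_isOpen univ isOpen_univ]
  haveI hνprob : IsProbabilityMeasure ν := ⟨le_antisymm hν_univ_le hν_univ_ge⟩
  refine ⟨⟨ν, hνprob⟩, φ, hφ, ?_⟩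
  set μs : ℕ → ProbabilityMeasure Q :=
    fun j => LevyProkhorov.toMeasureEquiv (u (φ j)) with hμs
  apply MeasureTheory.tendsto_of_forall_isOpen_le_liminf
  intro G hG
  have aux : ENNReal.ofNNReal (atTop.liminf (fun j => μs j G)) =
      atTop.liminf (ENNReal.ofNNReal ∘ fun j => μs j G) := by
    refine Monotone.map_liminf_of_continuousAt (F := atTop) ENNReal.coe_mono
      (fun j => μs j G) ?_ ?_ ?_
    · exact ENNReal.continuous_coe.continuousAt
    · exact IsBoundedUnder.isCoboundedUnder_ge ⟨1, by simp⟩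
    · exact ⟨0, by simp⟩
  rw [← ENNReal.coe_le_coe, aux]
  have hl : ENNReal.ofNNReal ∘ (fun j => μs j G) = fun j => μ (φ j) G := by
    funext j
    exact ProbabilityMeasure.ennreal_coeFn_eq_coeFn_toMeasure _ _
  rw [hl]
  exact (ProbabilityMeasure.ennreal_coeFn_eq_coeFn_toMeasure _ G).trans_le (hν_open G hG)

end Main

end ProhorovCompleteAux

/-- If `(Q,d)` is a complete separable metric space, then the space of Borel probability
measures on `Q` with the Prohorov metric is complete. -/
theorem prohorov_complete {Q : Type*} [MetricSpace Q] [MeasurableSpace Q] [BorelSpace Q]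
    [CompleteSpace Q] [SeparableSpace Q] :
    CompleteSpace (LevyProkhorov (ProbabilityMeasure Q)) := by
  rcases isEmpty_or_nonempty Q with hQ | hQ
  · haveI : IsEmpty (LevyProkhorov (ProbabilityMeasure Q)) := by
      constructor
      intro P
      have h := (LevyProkhorov.toMeasureEquiv P).2.measure_univ
      rw [Set.univ_eq_empty_iff.mpr hQ, measure_empty] at h
      exact zero_ne_one h
    exact ⟨fun hf => (hf.1.ne (Subsingleton.elim _ ⊥)).elim⟩
  · apply Metric.complete_of_cauchySeq_tendsto
    intro u hu
    obtain ⟨P, φ, hφ, htend⟩ := ProhorovCompleteAux.exists_subseq_tendsto u hu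
    refine ⟨LevyProkhorov.probabilityMeasureHomeomorph (Ω := Q) P,
      tendsto_nhds_of_cauchySeq_of_subseq hu hφ.tendsto_atTop ?_⟩
    exact ((LevyProkhorov.probabilityMeasureHomeomorph (Ω := Q)).continuous.tendsto P).comp htend
end

section
/- Let (Q,d) be a compact metric space, and for each N ∈ ℕ let L^N, L : P(Q) → ℝ be functions on the space of probability measures with the Prohorov metric such that each L^N is continuous, and whenever ρ(P_M, P) → 0 one has L^N(P_M) → L(P) as N, M → ∞. If P̂^N_M maximizes L^N over a subset P_M(Q) ⊆ P(Q), where P_M(Q) are increasing subsets whose union is dense in P(Q), then any subsequential limit P̂ of {P̂^N_M} (as M,N → ∞) maximizes L over P(Q). -/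
open MeasureTheory Metric Filter Topology

/-- Let `Q` be a compact metric space, `L^N, L : P(Q) → ℝ` with each `L^N` continuous for
the Prohorov metric, and such that whenever `ρ(P_M, P) → 0` one has `L^N(P_M) → L(P)` as
`N, M → ∞`.  If `P̂^N_M` maximizes `L^N` over increasing subsets `P_M(Q)` whose union is
dense, then any subsequential limit `P̂` of the `P̂^N_M` maximizes `L` over `P(Q)`. -/
theorem subsequential_limit_maximizes {Q : Type*} [MetricSpace Q] [CompactSpace Q]
    [MeasurableSpace Q] [BorelSpace Q]
    (LN : ℕ → ProbabilityMeasure Q → ℝ) (L : ProbabilityMeasure Q → ℝ)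
    (hcont : ∀ N, Continuous fun P : LevyProkhorov (ProbabilityMeasure Q) =>
      LN N (LevyProkhorov.toMeasureEquiv P))
    (hconv : ∀ (PM : ℕ → ProbabilityMeasure Q) (P : ProbabilityMeasure Q),
      Tendsto (fun M => levyProkhorovDist (PM M).toMeasure P.toMeasure) atTop (𝓝 0) →
      ∀ ε > (0 : ℝ), ∃ N₀ M₀ : ℕ, ∀ N ≥ N₀, ∀ M ≥ M₀, |LN N (PM M) - L P| < ε)
    (PMset : ℕ → Set (ProbabilityMeasure Q)) (hmono : Monotone PMset)
    (hdense : ∀ (P : ProbabilityMeasure Q), ∀ ε > (0 : ℝ),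
      ∃ M, ∃ P' ∈ PMset M, levyProkhorovDist P.toMeasure P'.toMeasure < ε)
    (Phat : ℕ → ℕ → ProbabilityMeasure Q)
    (hmem : ∀ N M, Phat N M ∈ PMset M)
    (hmax : ∀ N M, ∀ P ∈ PMset M, LN N P ≤ LN N (Phat N M))
    (P0 : ProbabilityMeasure Q) (φ ψ : ℕ → ℕ)
    (hφ : Tendsto φ atTop atTop) (hψ : Tendsto ψ atTop atTop)
    (hlim : Tendsto (fun k => levyProkhorovDist (Phat (φ k) (ψ k)).toMeasure P0.toMeasure)
      atTop (𝓝 0)) :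
    ∀ P : ProbabilityMeasure Q, L P ≤ L P0 := by
  intro P
  -- choose approximating sequence for P
  choose Mf Pf hPfmem hPfdist using fun j : ℕ => hdense P (1 / (j + 1)) (by positivity)
  have hPftend : Tendsto (fun j => levyProkhorovDist (Pf j).toMeasure P.toMeasure)
      atTop (𝓝 0) := by
    apply squeeze_zero (fun j => ENNReal.toReal_nonneg)
      (fun j => ?_) tendsto_one_div_add_atTop_nhds_zero_nat
    show levyProkhorovDist (Pf j).toMeasure P.toMeasure ≤ _
    rw [levyProkhorovDist_comm]
    exact (hPfdist j).le
  have h2 := hconv Pf P hPftend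
  refine le_of_forall_pos_le_add fun ε hε => ?_
  obtain ⟨N₁, K₁, h₁⟩ := hconv (fun k => Phat (φ k) (ψ k)) P0 hlim (ε / 2) (by positivity)
  obtain ⟨N₂, J₂, hJ⟩ := h2 (ε / 2) (by positivity)
  obtain ⟨k, hk1, hk2, hk3⟩ := ((hφ.eventually_ge_atTop (max N₁ N₂)).and
    ((hψ.eventually_ge_atTop (Mf J₂)).and (eventually_ge_atTop K₁))).exists
  have ha := hJ (φ k) (le_trans (le_max_right _ _) hk1) J₂ le_rfl
  have hb : LN (φ k) (Pf J₂) ≤ LN (φ k) (Phat (φ k) (ψ k)) :=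
    hmax (φ k) (ψ k) (Pf J₂) (hmono hk2 (hPfmem J₂))
  have hc := h₁ (φ k) (le_trans (le_max_left _ _) hk1) k hk3
  have ha' := abs_lt.mp ha
  have hc' := abs_lt.mp hc
  linarith [ha'.1, ha'.2, hc'.1, hc'.2]
end

section
/- Let Q be compact, and suppose for each k and q ∈ Q the approximate outputs satisfy |y_k^N(q) − y_k(q)| → 0 as N → ∞ uniformly in q ∈ Q, with all y_k^N, y_k uniformly bounded, and let φ : ℝ → ℝ be continuous. Then for any fixed data ŷ_k and any sequence of probability measures P_M with ρ(P_M, P) → 0 in the Prohorov metric, ∫_Q ∏_{k=1}^{n} φ(ŷ_k − y_k^N(q)) dP_M(q) → ∫_Q ∏_{k=1}^{n} φ(ŷ_k − y_k(q)) dP(q) as N, M → ∞. -/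
open MeasureTheory Metric Filter Topology

/-- Let `Q` be a compact metric space, `y_k^N → y_k` uniformly in `q` with all outputs
continuous and uniformly bounded, and `φ` continuous.  Then for fixed data `ŷ_k` and any
probability measures `P_M` with `ρ(P_M, P) → 0` in the Prohorov metric,
`∫_Q ∏_k φ(ŷ_k − y_k^N(q)) dP_M(q) → ∫_Q ∏_k φ(ŷ_k − y_k(q)) dP(q)` as `N, M → ∞`. -/
theorem likelihood_integrand_double_limit {Q : Type*} [MetricSpace Q] [CompactSpace Q]
    [MeasurableSpace Q] [BorelSpace Q]
    (n : ℕ) (y : Fin n → Q → ℝ) (yN : ℕ → Fin n → Q → ℝ)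
    (hy : ∀ k, Continuous (y k)) (hyN : ∀ N k, Continuous (yN N k))
    (hbdd : ∃ C : ℝ, ∀ N k q, |yN N k q| ≤ C ∧ |y k q| ≤ C)
    (hunif : ∀ k, TendstoUniformly (fun N => yN N k) (y k) atTop)
    (φ : ℝ → ℝ) (hφ : Continuous φ) (yhat : Fin n → ℝ)
    (PM : ℕ → ProbabilityMeasure Q) (P : ProbabilityMeasure Q)
    (hP : Tendsto (fun M => levyProkhorovDist (PM M).toMeasure P.toMeasure) atTop (𝓝 0)) :
    ∀ ε > (0 : ℝ), ∃ N₀ M₀ : ℕ, ∀ N ≥ N₀, ∀ M ≥ M₀,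
      |(∫ q, (∏ k, φ (yhat k - yN N k q)) ∂(PM M).toMeasure) -
        ∫ q, (∏ k, φ (yhat k - y k q)) ∂P.toMeasure| < ε := by
  intro ε εpos
  obtain ⟨C, hC⟩ := hbdd
  set C' : ℝ := max C 0 with hC'
  have hC'0 : (0 : ℝ) ≤ C' := le_max_right _ _
  -- weak convergence of the measures
  have hPMconv : Tendsto PM atTop (𝓝 P) := by
    let e := (LevyProkhorov.toMeasureEquiv (α := ProbabilityMeasure Q)).symm
    have h1 : Tendsto (e ∘ PM) atTop
        (@nhds (LevyProkhorov (ProbabilityMeasure Q)) _ (e P)) := by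
      apply (@tendsto_iff_dist_tendsto_zero (LevyProkhorov (ProbabilityMeasure Q)) ℕ _ _ _ _).mpr
      exact hP
    exact (LevyProkhorov.continuous_toMeasure_probabilityMeasure (Ω := Q)).tendsto (e P) |>.comp h1
  -- the limit integrand
  have hfcont : Continuous (fun q => ∏ k, φ (yhat k - y k q)) :=
    continuous_finset_prod _ fun k _ => hφ.comp (continuous_const.sub (hy k))
  set fb : BoundedContinuousFunction Q ℝ := BoundedContinuousFunction.mkOfCompact ⟨_, hfcont⟩ with hfb
  have hint : Tendsto (fun M => ∫ q, (∏ k, φ (yhat k - y k q)) ∂(PM M).toMeasure) atTop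
      (𝓝 (∫ q, (∏ k, φ (yhat k - y k q)) ∂P.toMeasure)) :=
    ProbabilityMeasure.tendsto_iff_forall_integral_tendsto.mp hPMconv fb
  obtain ⟨M₀, hM₀⟩ := (Metric.tendsto_atTop.mp hint (ε/2) (by linarith))
  -- uniform continuity of the product map on the compact ball
  set F : (Fin n → ℝ) → ℝ := fun v => ∏ k, φ (yhat k - v k) with hF
  have hFcont : Continuous F :=
    continuous_finset_prod _ fun k _ => hφ.comp (continuous_const.sub (continuous_apply k))
  have hKc : IsCompact (closedBall (0 : Fin n → ℝ) C') := isCompact_closedBall _ _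
  have hFuc : UniformContinuousOn F (closedBall (0 : Fin n → ℝ) C') :=
    hKc.uniformContinuousOn_of_continuous hFcont.continuousOn
  obtain ⟨δ, δpos, hδ⟩ := (Metric.uniformContinuousOn_iff.mp hFuc) (ε/2) (by linarith)
  -- membership in the ball
  have memK : ∀ (v : Fin n → ℝ), (∀ k, |v k| ≤ C) → v ∈ closedBall (0 : Fin n → ℝ) C' := by
    intro v hv
    rw [mem_closedBall, dist_pi_le_iff hC'0]
    intro k
    simp only [Real.dist_eq, Pi.zero_apply, sub_zero]
    exact (hv k).trans (le_max_left _ _)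
  -- uniform convergence: pick N₀
  have hev : ∀ᶠ N in atTop, ∀ k : Fin n, ∀ q, dist (y k q) (yN N k q) < δ :=
    eventually_all.mpr fun k => (Metric.tendstoUniformly_iff.mp (hunif k)) δ δpos
  obtain ⟨N₀, hN₀⟩ := eventually_atTop.mp hev
  refine ⟨N₀, M₀, fun N hN M hM => ?_⟩
  -- pointwise estimate
  have hpt : ∀ q, |(∏ k, φ (yhat k - yN N k q)) - ∏ k, φ (yhat k - y k q)| ≤ ε/2 := by
    intro q
    have h1 : (fun k => yN N k q) ∈ closedBall (0 : Fin n → ℝ) C' :=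
      memK _ fun k => (hC N k q).1
    have h2 : (fun k => y k q) ∈ closedBall (0 : Fin n → ℝ) C' :=
      memK _ fun k => (hC N k q).2
    have hd : dist (fun k => yN N k q) (fun k => y k q) < δ := by
      rw [dist_pi_lt_iff δpos]
      intro k
      rw [dist_comm]
      exact hN₀ N hN k q
    have := hδ _ h1 _ h2 hd
    rw [Real.dist_eq] at this
    exact this.le
  -- integrability
  have hgcont : Continuous (fun q => ∏ k, φ (yhat k - yN N k q)) :=
    continuous_finset_prod _ fun k _ => hφ.comp (continuous_const.sub (hyN N k))
  have hgint : Integrable (fun q => ∏ k, φ (yhat k - yN N k q)) (PM M).toMeasure :=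
    hgcont.integrable_of_hasCompactSupport (HasCompactSupport.of_compactSpace _)
  have hfint : Integrable (fun q => ∏ k, φ (yhat k - y k q)) (PM M).toMeasure :=
    hfcont.integrable_of_hasCompactSupport (HasCompactSupport.of_compactSpace _)
  -- first term bound
  have hterm1 : |(∫ q, (∏ k, φ (yhat k - yN N k q)) ∂(PM M).toMeasure) -
      ∫ q, (∏ k, φ (yhat k - y k q)) ∂(PM M).toMeasure| ≤ ε/2 := by
    rw [← integral_sub hgint hfint]
    have := norm_integral_le_of_norm_le_const (μ := (PM M).toMeasure)
      (f := fun q => (∏ k, φ (yhat k - yN N k q)) - ∏ k, φ (yhat k - y k q))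
      (C := ε/2) (Filter.Eventually.of_forall fun q => by
        rw [Real.norm_eq_abs]; exact hpt q)
    simpa [measure_univ] using this
  have hterm2 : |(∫ q, (∏ k, φ (yhat k - y k q)) ∂(PM M).toMeasure) -
      ∫ q, (∏ k, φ (yhat k - y k q)) ∂P.toMeasure| < ε/2 := by
    have := hM₀ M hM
    rwa [Real.dist_eq] at this
  calc |(∫ q, (∏ k, φ (yhat k - yN N k q)) ∂(PM M).toMeasure) -
        ∫ q, (∏ k, φ (yhat k - y k q)) ∂P.toMeasure|
      ≤ |(∫ q, (∏ k, φ (yhat k - yN N k q)) ∂(PM M).toMeasure) -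
          ∫ q, (∏ k, φ (yhat k - y k q)) ∂(PM M).toMeasure| +
        |(∫ q, (∏ k, φ (yhat k - y k q)) ∂(PM M).toMeasure) -
          ∫ q, (∏ k, φ (yhat k - y k q)) ∂P.toMeasure| := abs_sub_le _ _ _
    _ < ε := by linarith
end
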